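/- Suppose given: (i) morphisms v : P ⟶ T(E) and u : P ⟶ A in 𝒳 forming a pullback square of T(f) : T(E) ⟶ T(A) along z_A : A ⟶ T(A), i.e. T(f) ∘ v = z_A ∘ u and the square is a pullback; (ii) morphisms v' : P' ⟶ T'(F(E)) and u' : P' ⟶ B in 𝒳' forming a pullback square of T'(φ ∘ F(f)) : T'(F(E)) ⟶ T'(B) along z'_B : B ⟶ T'(B). Assume that (a) the naturality square of α at f is a pullback, i.e. the square with sides α_E : F(T(E)) ⟶ T'(F(E)), α_A : F(T(A)) ⟶ T'(F(A)), F(T(f)) and T'(F(f)) is a pullback in 𝒳'; (b) the square with sides z'_{F A} : F(A) ⟶ T'(F(A)), z'_B : B ⟶ T'(B), φ and T'(φ) is a pullback in 𝒳'; (c) F preserves the pullback (i), i.e. the square with sides F(v), F(u), F(T(f)) and F(z_A) is a pullback in 𝒳'. Then there exists a unique morphism θ : F(P) ⟶ P' with v' ∘ θ = α_E ∘ F(v) and u' ∘ θ = φ ∘ F(u), and θ is an isomorphism. -/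
import Mathlib


open CategoryTheory

universe v₁ v₂ u₁ u₂

/-- For a Cartesian morphism of tangent pairs, the comparison morphism
`θ : F(P) ⟶ P'` between the vertical tangent pullbacks exists, is unique, and
is an isomorphism. -/
theorem cartesian_comparison_iso
    {C : Type u₁} [Category.{v₁} C] {D : Type u₂} [Category.{v₂} D]
    (F : C ⥤ D) (T : C ⥤ C) (T' : D ⥤ D)
    (α : T ⋙ F ⟶ F ⋙ T') (z : 𝟭 C ⟶ T) (z' : 𝟭 D ⟶ T')
    (hz : ∀ X : C, F.map (z.app X) ≫ α.app X = z'.app (F.obj X))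
    (A E : C) (B : D) (φ : F.obj A ⟶ B) (f : E ⟶ A)
    (P : C) (v : P ⟶ T.obj E) (u : P ⟶ A)
    (hP : IsPullback v u (T.map f) (z.app A))
    (P' : D) (v' : P' ⟶ T'.obj (F.obj E)) (u' : P' ⟶ B)
    (hP' : IsPullback v' u' (T'.map (F.map f ≫ φ)) (z'.app B))
    (ha : IsPullback (α.app E) (F.map (T.map f)) (T'.map (F.map f)) (α.app A))
    (hb : IsPullback (z'.app (F.obj A)) φ (T'.map φ) (z'.app B))
    (hc : IsPullback (F.map v) (F.map u) (F.map (T.map f)) (F.map (z.app A))) :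
    (∃! θ : F.obj P ⟶ P',
        θ ≫ v' = F.map v ≫ α.app E ∧ θ ≫ u' = F.map u ≫ φ) ∧
    ∀ θ : F.obj P ⟶ P',
      θ ≫ v' = F.map v ≫ α.app E → θ ≫ u' = F.map u ≫ φ → IsIso θ := by
  -- Paste `hc` with `ha` horizontally
  have h1 : IsPullback (F.map v ≫ α.app E) (F.map u) (T'.map (F.map f))
      (z'.app (F.obj A)) := by
    have := hc.paste_horiz ha
    rwa [hz A] at this
  -- Paste with `hb` vertically
  have h2 : IsPullback (F.map v ≫ α.app E) (F.map u ≫ φ)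
      (T'.map (F.map f ≫ φ)) (z'.app B) := by
    have := h1.paste_vert hb
    rwa [← T'.map_comp] at this
  -- comparison isomorphism between the two pullbacks of the same cospan
  let i := h2.isoIsPullback _ _ hP'
  have hfst : i.hom ≫ v' = F.map v ≫ α.app E :=
    h2.isoIsPullback_hom_fst (h' := hP')
  have hsnd : i.hom ≫ u' = F.map u ≫ φ :=
    h2.isoIsPullback_hom_snd (h' := hP')
  have huniq : ∀ θ : F.obj P ⟶ P',
      θ ≫ v' = F.map v ≫ α.app E → θ ≫ u' = F.map u ≫ φ → θ = i.hom := by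
    intro θ h₁ h₂
    apply hP'.hom_ext <;> simp [h₁, h₂, hfst, hsnd]
  refine ⟨⟨i.hom, ⟨hfst, hsnd⟩, fun θ ⟨h₁, h₂⟩ => huniq θ h₁ h₂⟩, ?_⟩
  intro θ h₁ h₂
  rw [huniq θ h₁ h₂]
  infer_instance
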